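/- Let ∑ y_n be a conditionally convergent series of real numbers and ∑ x_n an absolutely convergent series with x_n > 0 for all n. Define v_n = (x_n, y_n) ∈ ℝ². Then the set of Levy vectors of ∑ v_n equals {(0,1), (0,-1)} and A_abs(v_n) ≠ A(v_n); in fact the point (∑ x_n, ∑ y_n) lies in A(v_n) but not in A_abs(v_n). -/

import Mathlib

open Filter Topology

/-- Euclidean norm on the plane `ℝ × ℝ`. -/
noncomputable def enorm2 (v : ℝ × ℝ) : ℝ := Real.sqrt (v.1 ^ 2 + v.2 ^ 2)

/-- Euclidean inner product on the plane. -/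
def dot2 (u v : ℝ × ℝ) : ℝ := u.1 * v.1 + u.2 * v.2

/-- `u` is a Levy vector of the series `∑ x n`: `u` is a unit vector and for every `ε > 0`
the sum of norms of the terms lying in the cone `S_ε(u)` diverges. -/
noncomputable def IsLevy (x : ℕ → ℝ × ℝ) (u : ℝ × ℝ) : Prop :=
  enorm2 u = 1 ∧ ∀ ε : ℝ, 0 < ε → ¬ Summable (fun n =>
    if (1 - ε) * enorm2 u * enorm2 (x n) ≤ dot2 u (x n) then enorm2 (x n) else 0)

/-- The series `∑ x n` converges (in the given order) to `s`. -/
def ConvergesTo (x : ℕ → ℝ × ℝ) (s : ℝ × ℝ) : Prop :=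
  Tendsto (fun N => ∑ n ∈ Finset.range N, x n) atTop (𝓝 s)

/-- The series `∑ x n` is conditionally convergent. -/
noncomputable def CondConv (x : ℕ → ℝ × ℝ) : Prop :=
  (∃ s, ConvergesTo x s) ∧ ¬ Summable (fun n => enorm2 (x n))

/-- `s` belongs to the achievement set `A(x)`. -/
def Achieves (x : ℕ → ℝ × ℝ) (s : ℝ × ℝ) : Prop :=
  ∃ E : Set ℕ, ConvergesTo (Set.indicator E x) s

/-- `s` belongs to the absolute achievement set `A_abs(x)`. -/
noncomputable def AchievesAbs (x : ℕ → ℝ × ℝ) (s : ℝ × ℝ) : Prop :=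
  ∃ E : Set ℕ, Summable (fun n => enorm2 (Set.indicator E x n)) ∧
    HasSum (Set.indicator E x) s

/-- The reduction property of a series `∑ (x n, y n)`. -/
noncomputable def ReductionProperty (x y : ℕ → ℝ) : Prop :=
  Tendsto (fun n => |y n| / |x n|) atTop atTop ∧
  ∀ ε : ℝ, 0 < ε → ∀ t ∈ Set.Ioo (-ε) ε, ∀ N : ℕ,
    ∃ m : ℕ, ∃ k : ℕ → ℕ, 0 < m ∧ StrictMono k ∧ N ≤ k 0 ∧
      |(∑ i ∈ Finset.range m, x (k i)) - t| < ε / 2 ∧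
      ∀ j : ℕ, 1 ≤ j → j ≤ m →
        |∑ i ∈ Finset.range j, x (k i)| < ε ∧ |∑ i ∈ Finset.range j, y (k i)| < ε

lemma enorm2_nn (v : ℝ × ℝ) : 0 ≤ enorm2 v := Real.sqrt_nonneg _
lemma abs_snd_le_enorm2 (v : ℝ × ℝ) : |v.2| ≤ enorm2 v := by
  rw [enorm2, ← Real.sqrt_sq_eq_abs]
  exact Real.sqrt_le_sqrt (by nlinarith [sq_nonneg v.1])
lemma enorm2_le_add (v : ℝ × ℝ) : enorm2 v ≤ |v.1| + |v.2| := by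
  rw [enorm2]
  calc Real.sqrt (v.1^2+v.2^2) ≤ Real.sqrt ((|v.1|+|v.2|)^2) :=
        Real.sqrt_le_sqrt (by nlinarith [abs_nonneg v.1, abs_nonneg v.2, sq_abs v.1, sq_abs v.2])
    _ = |v.1|+|v.2| := Real.sqrt_sq (by positivity)

lemma summable_of_tendsto_nonneg {f : ℕ → ℝ} (hf : ∀ n, 0 ≤ f n) {L : ℝ}
    (h : Tendsto (fun N => ∑ n ∈ Finset.range N, f n) atTop (𝓝 L)) : Summable f := by
  refine summable_of_sum_range_le (c := L) hf (fun n => ?_)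
  have hmono : Monotone (fun N => ∑ n ∈ Finset.range N, f n) :=
    monotone_nat_of_le_succ (fun N => by simp [Finset.sum_range_succ, hf N])
  exact hmono.ge_of_tendsto h n

lemma not_summable_posPart (y : ℕ → ℝ) (sy : ℝ)
    (hy : Tendsto (fun N => ∑ n ∈ Finset.range N, y n) atTop (𝓝 sy))
    (hyabs : ¬ Summable (fun n => |y n|)) :
    ¬ Summable (fun n => max (y n) 0) := by
  intro hp
  have hneg : Summable (fun n => max (-y n) 0) := by
    have h1 := (hp.hasSum.tendsto_sum_nat).sub hy
    have h2 : Tendsto (fun N => ∑ n ∈ Finset.range N, max (-y n) 0) atTop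
        (𝓝 ((∑' n, max (y n) 0) - sy)) := by
      refine h1.congr (fun N => ?_)
      rw [← Finset.sum_sub_distrib]
      exact Finset.sum_congr rfl (fun n _ => by
        rcases le_total (y n) 0 with h | h
        · rw [max_eq_right h, max_eq_left (by linarith)]; ring
        · rw [max_eq_left h, max_eq_right (by linarith)]; ring)
    exact summable_of_tendsto_nonneg (fun n => le_max_right _ _) h2
  apply hyabs
  refine (hp.add hneg).congr (fun n => ?_)
  rcases le_total (y n) 0 with h | h
  · rw [max_eq_right h, max_eq_left (by linarith), abs_of_nonpos h]; ring
  · rw [max_eq_left h, max_eq_right (by linarith), abs_of_nonneg h]; ring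

lemma key_div (x y : ℕ → ℝ) (hxpos : ∀ n, 0 < x n) (hxabs : Summable x)
    (hp : ¬ Summable (fun n => max (y n) 0)) (ε : ℝ) (hε : 0 < ε) :
    ¬ Summable (fun n =>
      if (1 - ε) * enorm2 (x n, y n) ≤ y n then enorm2 (x n, y n) else 0) := by
  intro hsum
  set ε' := min ε (1/2) with hε'def
  have hε'pos : 0 < ε' := lt_min hε (by norm_num)
  have hε'le : ε' ≤ 1/2 := min_le_right _ _
  have hε'ε : ε' ≤ ε := min_le_left _ _
  have hsum' : Summable (fun n =>
      if (1 - ε') * enorm2 (x n, y n) ≤ y n then enorm2 (x n, y n) else 0) := by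
    refine Summable.of_nonneg_of_le (fun n => ?_) (fun n => ?_) hsum
    · split <;> [exact enorm2_nn _; exact le_rfl]
    · by_cases h : (1 - ε') * enorm2 (x n, y n) ≤ y n
      · rw [if_pos h, if_pos (le_trans (by nlinarith [enorm2_nn (x n, y n)]) h)]
      · rw [if_neg h]; split <;> [exact enorm2_nn _; exact le_rfl]
  apply hp
  have hc : 0 ≤ (1 - ε') / ε' := div_nonneg (by linarith) hε'pos.le
  refine Summable.of_nonneg_of_le (fun n => le_max_right _ _) (fun n => ?_)
    (hsum'.add (hxabs.mul_left ((1 - ε') / ε')))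
  have he1 : |y n| ≤ enorm2 (x n, y n) := abs_snd_le_enorm2 (x n, y n)
  have he2 : enorm2 (x n, y n) ≤ x n + |y n| := by
    have := enorm2_le_add (x n, y n)
    rwa [abs_of_pos (hxpos n)] at this
  have he0 : 0 ≤ enorm2 (x n, y n) := enorm2_nn _
  by_cases h : (1 - ε') * enorm2 (x n, y n) ≤ y n
  · rw [if_pos h]
    have hy0 : 0 ≤ y n := le_trans (by nlinarith) h
    rw [max_eq_left hy0]
    have : y n ≤ enorm2 (x n, y n) := le_trans (le_abs_self _) he1
    nlinarith [(hxpos n).le]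
  · rw [if_neg h]
    push_neg at h
    rcases le_total (y n) 0 with h0 | h0
    · rw [max_eq_right h0]
      nlinarith [(hxpos n).le]
    · rw [max_eq_left h0]
      rw [abs_of_nonneg h0] at he2
      have hkey : ε' * y n ≤ (1 - ε') * x n := by nlinarith
      have : y n ≤ ((1 - ε') / ε') * x n := by
        rw [div_mul_eq_mul_div, le_div_iff₀ hε'pos]
        nlinarith
      linarith

theorem stmt_14 (x y : ℕ → ℝ) (hxpos : ∀ n, 0 < x n) (hxabs : Summable x)
    (sy : ℝ) (hy : Tendsto (fun N => ∑ n ∈ Finset.range N, y n) atTop (𝓝 sy))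
    (hyabs : ¬ Summable (fun n => |y n|)) :
    {u : ℝ × ℝ | IsLevy (fun n => (x n, y n)) u} = {((0 : ℝ), (1 : ℝ)), ((0 : ℝ), (-1 : ℝ))} ∧
    Achieves (fun n => (x n, y n)) ((∑' n, x n), sy) ∧
    ¬ AchievesAbs (fun n => (x n, y n)) ((∑' n, x n), sy) ∧
    {s : ℝ × ℝ | AchievesAbs (fun n => (x n, y n)) s} ≠
      {s : ℝ × ℝ | Achieves (fun n => (x n, y n)) s} := by
  have hppos := not_summable_posPart y sy hy hyabs
  have hpneg : ¬ Summable (fun n => max (-y n) 0) := by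
    refine not_summable_posPart (fun n => -y n) (-sy) ?_ ?_
    · refine hy.neg.congr (fun N => ?_)
      simp
    · intro h; exact hyabs (h.congr (fun n => by simp))
  -- Part 2
  have h2 : Achieves (fun n => (x n, y n)) ((∑' n, x n), sy) := by
    refine ⟨Set.univ, ?_⟩
    rw [ConvergesTo, Set.indicator_univ]
    have hx := hxabs.hasSum.tendsto_sum_nat
    refine (hx.prodMk_nhds hy).congr (fun N => ?_)
    exact (Prod.ext (by simp [Prod.fst_sum]) (by simp [Prod.snd_sum])).symm
  -- Part 3
  have h3 : ¬ AchievesAbs (fun n => (x n, y n)) ((∑' n, x n), sy) := by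
    rintro ⟨E, hsumm, hhas⟩
    have hfst : HasSum (fun n => (Set.indicator E (fun n => (x n, y n)) n).1) (∑' n, x n) :=
      hhas.map (AddMonoidHom.fst ℝ ℝ) continuous_fst
    have hind : (fun n => (Set.indicator E (fun n => (x n, y n)) n).1) = Set.indicator E x := by
      funext n
      by_cases h : n ∈ E <;> simp [Set.indicator_of_mem, Set.indicator_of_notMem, h]
    rw [hind] at hfst
    by_cases hE : ∀ n, n ∈ E
    · have hEuniv : E = Set.univ := Set.eq_univ_of_forall hE
      rw [hEuniv, Set.indicator_univ] at hsumm
      exact hyabs (Summable.of_nonneg_of_le (fun n => abs_nonneg _)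
        (fun n => abs_snd_le_enorm2 (x n, y n)) hsumm)
    · push_neg at hE
      obtain ⟨n0, hn0⟩ := hE
      have hlt : ∑' n, Set.indicator E x n < ∑' n, x n := by
        refine Summable.tsum_lt_tsum_of_nonneg (i := n0) (fun n => ?_) (fun n => ?_) ?_ hxabs
        · by_cases h : n ∈ E <;> simp [h, (hxpos n).le]
        · by_cases h : n ∈ E <;> simp [h, (hxpos n).le]
        · simp [hn0, hxpos n0]
      rw [hfst.tsum_eq] at hlt
      exact lt_irrefl _ hlt
  refine ⟨?_, h2, h3, ?_⟩
  · ext u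
    simp only [Set.mem_setOf_eq, Set.mem_insert_iff, Set.mem_singleton_iff]
    constructor
    · rintro ⟨hnorm, hdiv⟩
      by_contra hne
      push_neg at hne
      obtain ⟨hne1, hne2⟩ := hne
      have hsq : u.1 ^ 2 + u.2 ^ 2 = 1 := by
        have := congrArg (· ^ 2) hnorm
        simpa [enorm2, Real.sq_sqrt (by positivity : (0:ℝ) ≤ u.1 ^ 2 + u.2 ^ 2)] using this
      have hb : |u.2| < 1 := by
        rcases lt_or_ge (|u.2|) 1 with h | h
        · exact h
        · exfalso
          have h2' : u.2 ^ 2 ≥ 1 := by nlinarith [sq_abs u.2]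
          have h1' : u.1 = 0 := by nlinarith [sq_nonneg u.1]
          have : u.2 = 1 ∨ u.2 = -1 := by
            have hz : (u.2 - 1) * (u.2 + 1) = 0 := by nlinarith [sq_nonneg u.1]
            rcases mul_eq_zero.mp hz with h | h
            · left; linarith
            · right; linarith
          rcases this with h | h
          · exact hne1 (Prod.ext h1' h)
          · exact hne2 (Prod.ext h1' h)
      set ε := (1 - |u.2|) / 2 with hεdef
      have hεpos : 0 < ε := by simp [hεdef]; linarith
      refine hdiv ε hεpos ?_
      have hCnn : 0 ≤ |u.1| / ε := div_nonneg (abs_nonneg _) hεpos.le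
      refine Summable.of_nonneg_of_le (fun n => ?_) (fun n => ?_) (hxabs.mul_left (|u.1| / ε))
      · split <;> [exact enorm2_nn _; exact le_rfl]
      · by_cases h : (1 - ε) * enorm2 u * enorm2 (x n, y n) ≤ dot2 u (x n, y n)
        · rw [if_pos h]
          rw [hnorm, mul_one] at h
          have hd : dot2 u (x n, y n) ≤ |u.1| * x n + |u.2| * enorm2 (x n, y n) := by
            have h1 : u.1 * x n ≤ |u.1| * x n :=
              mul_le_mul_of_nonneg_right (le_abs_self _) (hxpos n).le
            have h2' : u.2 * y n ≤ |u.2| * enorm2 (x n, y n) := by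
              calc u.2 * y n ≤ |u.2 * y n| := le_abs_self _
                _ = |u.2| * |y n| := abs_mul _ _
                _ ≤ |u.2| * enorm2 (x n, y n) :=
                    mul_le_mul_of_nonneg_left (abs_snd_le_enorm2 (x n, y n)) (abs_nonneg _)
            simpa [dot2] using add_le_add h1 h2'
          have h1ε : 1 - ε - |u.2| = ε := by rw [hεdef]; ring
          have : ε * enorm2 (x n, y n) ≤ |u.1| * x n := by nlinarith [enorm2_nn (x n, y n)]
          rw [div_mul_eq_mul_div, le_div_iff₀ hεpos]
          nlinarith
        · rw [if_neg h]
          exact mul_nonneg hCnn (hxpos n).le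
    · rintro (rfl | rfl)
      · refine ⟨by norm_num [enorm2], fun ε hε => ?_⟩
        have := key_div x y hxpos hxabs hppos ε hε
        intro hs
        refine this (hs.congr (fun n => ?_))
        norm_num [enorm2, dot2]
        exact if_congr Iff.rfl rfl rfl
      · refine ⟨by norm_num [enorm2], fun ε hε => ?_⟩
        have := key_div x (fun n => -y n) hxpos hxabs hpneg ε hε
        intro hs
        refine this (hs.congr (fun n => ?_))
        norm_num [enorm2, dot2, neg_sq]
  · intro heq
    have := (Set.ext_iff.mp heq ((∑' n, x n), sy)).mpr h2
    exact h3 this
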